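/- arXiv:1807.00159 — 2 statements merged into one kernel-verified Lean document; each statement's English description precedes it below -/
import Mathlib

section
/- Let G be the group with presentation ⟨s₁,s₂,s₃,h | [sₖ,h] for 1≤k≤3, s₁²h, s₂³h, s₃⁶h, s₁s₂s₃h⟩. Then there is exactly one surjective homomorphism φ : G → ℤ/2; it satisfies φ(s₁)=1, φ(s₂)=0, φ(s₃)=1, φ(h)=0, and it factors through ℤ via ψ with ψ(s₁)=3, ψ(s₂)=2, ψ(s₃)=1, ψ(h)=-6. -/
open FreeGroup

/-- Relators of π₁(M₅) = ⟨s₁,s₂,s₃,h | [sₖ,h] (1≤k≤3), s₁²h, s₂³h, s₃⁶h, s₁s₂s₃h⟩,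
generators s₁=0, s₂=1, s₃=2, h=3. -/
def relsM5 : Set (FreeGroup (Fin 4)) :=
  { of 0 * of 3 * (of 0)⁻¹ * (of 3)⁻¹,
    of 1 * of 3 * (of 1)⁻¹ * (of 3)⁻¹,
    of 2 * of 3 * (of 2)⁻¹ * (of 3)⁻¹,
    of 0 ^ 2 * of 3, of 1 ^ 3 * of 3, of 2 ^ 6 * of 3,
    of 0 * of 1 * of 2 * of 3 }

/-- Reduction mod 2, multiplicatively. -/
def mod2 : Multiplicative ℤ →* Multiplicative (ZMod 2) :=
  AddMonoidHom.toMultiplicative (Int.castAddHom (ZMod 2))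

def fψ : Fin 4 → Multiplicative ℤ := ![Multiplicative.ofAdd 3, Multiplicative.ofAdd 2,
  Multiplicative.ofAdd 1, Multiplicative.ofAdd (-6)]

lemma fψ_rels : ∀ r ∈ relsM5, FreeGroup.lift fψ r = 1 := by
  intro r hr
  rcases hr with rfl|rfl|rfl|rfl|rfl|rfl|rfl <;>
    simp [fψ, ← ofAdd_add, ← ofAdd_neg] <;> rfl

noncomputable def ψ0 : PresentedGroup relsM5 →* Multiplicative ℤ := PresentedGroup.toGroup fψ_rels

lemma rel_one {r : FreeGroup (Fin 4)} (hr : r ∈ relsM5) :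
    PresentedGroup.mk relsM5 r = 1 :=
  (QuotientGroup.eq_one_iff r).mpr (Subgroup.subset_normalClosure hr)

lemma fin4_cases (x : Fin 4) : x = 0 ∨ x = 1 ∨ x = 2 ∨ x = 3 := by revert x; decide

lemma gen_vals (φ : PresentedGroup relsM5 →* Multiplicative (ZMod 2))
    (hφ : Function.Surjective φ) :
    φ (PresentedGroup.of 0) = Multiplicative.ofAdd (1 : ZMod 2) ∧
    φ (PresentedGroup.of 1) = Multiplicative.ofAdd (0 : ZMod 2) ∧
    φ (PresentedGroup.of 2) = Multiplicative.ofAdd (1 : ZMod 2) ∧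
    φ (PresentedGroup.of 3) = Multiplicative.ofAdd (0 : ZMod 2) := by
  have h4 := rel_one (show of 0 ^ 2 * of 3 ∈ relsM5 by simp [relsM5])
  have h5 := rel_one (show of 1 ^ 3 * of 3 ∈ relsM5 by simp [relsM5])
  have h7 := rel_one (show of 0 * of 1 * of 2 * of 3 ∈ relsM5 by simp [relsM5])
  have e4 := congrArg φ h4
  have e5 := congrArg φ h5
  have e7 := congrArg φ h7
  simp at e4 e5 e7
  have key : ∀ a b c d : Multiplicative (ZMod 2), a ^ 2 * d = 1 → b ^ 3 * d = 1 →
      a * b * c * d = 1 →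
      (a = 1 ∨ a = Multiplicative.ofAdd (1 : ZMod 2)) ∧ b = Multiplicative.ofAdd (0 : ZMod 2) ∧
        c = a ∧ d = Multiplicative.ofAdd (0 : ZMod 2) := by decide
  obtain ⟨ha, hb, hc, hd⟩ := key _ _ _ _ e4 e5 e7
  rcases ha with ha | ha
  · exfalso
    have hc' : φ (PresentedGroup.of 2) = 1 := hc.trans ha
    have : φ = 1 := by
      apply PresentedGroup.ext
      intro x
      rcases fin4_cases x with rfl | rfl | rfl | rfl
      · exact ha
      · exact hb
      · exact hc'
      · exact hd
    obtain ⟨g, hg⟩ := hφ (Multiplicative.ofAdd (1 : ZMod 2))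
    rw [this] at hg
    simp only [MonoidHom.one_apply] at hg
    exact absurd hg (by decide)
  · exact ⟨ha, hb, hc.trans ha, hd⟩

/-- There is exactly one epimorphism π₁(M₅) → ℤ/2; it has values (1,0,1,0) on
(s₁,s₂,s₃,h) and factors through ℤ via ψ with values (3,2,1,-6). -/
theorem stmt9 :
    Nat.card {φ : PresentedGroup relsM5 →* Multiplicative (ZMod 2) //
        Function.Surjective φ} = 1 ∧
    ∀ φ : PresentedGroup relsM5 →* Multiplicative (ZMod 2), Function.Surjective φ →
      φ (PresentedGroup.of 0) = Multiplicative.ofAdd (1 : ZMod 2) ∧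
      φ (PresentedGroup.of 1) = Multiplicative.ofAdd (0 : ZMod 2) ∧
      φ (PresentedGroup.of 2) = Multiplicative.ofAdd (1 : ZMod 2) ∧
      φ (PresentedGroup.of 3) = Multiplicative.ofAdd (0 : ZMod 2) ∧
      ∃ ψ : PresentedGroup relsM5 →* Multiplicative ℤ,
        ψ (PresentedGroup.of 0) = Multiplicative.ofAdd (3 : ℤ) ∧
        ψ (PresentedGroup.of 1) = Multiplicative.ofAdd (2 : ℤ) ∧
        ψ (PresentedGroup.of 2) = Multiplicative.ofAdd (1 : ℤ) ∧
        ψ (PresentedGroup.of 3) = Multiplicative.ofAdd (-6 : ℤ) ∧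
        φ = mod2.comp ψ := by
  have hψ0 : ∀ x : Fin 4, ψ0 (PresentedGroup.of x) = fψ x := fun x => PresentedGroup.toGroup.of _
  have hφ0surj : Function.Surjective (mod2.comp ψ0) := by
    intro y
    have : y = 1 ∨ y = Multiplicative.ofAdd (1 : ZMod 2) := by revert y; decide
    rcases this with rfl | rfl
    · exact ⟨1, map_one _⟩
    · refine ⟨PresentedGroup.of 2, ?_⟩
      simp only [MonoidHom.comp_apply, hψ0]
      decide
  constructor
  · rw [Nat.card_eq_one_iff_unique]
    constructor
    · constructor
      intro ⟨φ, hφ⟩ ⟨φ', hφ'⟩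
      obtain ⟨a1, b1, c1, d1⟩ := gen_vals φ hφ
      obtain ⟨a2, b2, c2, d2⟩ := gen_vals φ' hφ'
      refine Subtype.ext (PresentedGroup.ext fun x => ?_)
      show φ _ = φ' _
      rcases fin4_cases x with rfl | rfl | rfl | rfl
      · rw [a1, a2]
      · rw [b1, b2]
      · rw [c1, c2]
      · rw [d1, d2]
    · exact ⟨⟨_, hφ0surj⟩⟩
  · intro φ hφ
    obtain ⟨a1, b1, c1, d1⟩ := gen_vals φ hφ
    refine ⟨a1, b1, c1, d1, ψ0, hψ0 0, hψ0 1, hψ0 2, hψ0 3, ?_⟩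
    apply PresentedGroup.ext
    intro x
    have : ∀ x, mod2.comp ψ0 (PresentedGroup.of x) = mod2 (fψ x) := fun x => by
      simp [MonoidHom.comp_apply, hψ0]
    rw [this]
    rcases fin4_cases x with rfl | rfl | rfl | rfl
    · rw [a1]; decide
    · rw [b1]; decide
    · rw [c1]; decide
    · rw [d1]; decide
end

section
/- Let G be the group with presentation ⟨v₁,v₂,h | v₁hv₁⁻¹h⁻¹, v₂hv₂⁻¹h, v₁²v₂²h⁻¹⟩ (the fundamental group of N₄). Then there are exactly 3 surjective homomorphisms G → ℤ/2, each sending h to 0; the one with φ(v₁)=φ(v₂)=1 factors through ℤ via ψ(v₁)=1, ψ(v₂)=-1, ψ(h)=0, while the two epimorphisms with {φ(v₁),φ(v₂)}={0,1} admit no factorization through ℤ. -/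
open FreeGroup

/-- Relators of π₁(N₄) = ⟨v₁,v₂,h | v₁hv₁⁻¹h⁻¹, v₂hv₂⁻¹h, v₁²v₂²h⁻¹⟩,
generators v₁=0, v₂=1, h=2. -/
def relsN4 : Set (FreeGroup (Fin 3)) :=
  { of 0 * of 2 * (of 0)⁻¹ * (of 2)⁻¹,
    of 1 * of 2 * (of 1)⁻¹ * of 2,
    of 0 ^ 2 * of 1 ^ 2 * (of 2)⁻¹ }

lemma mk_rel_eq_one {r : FreeGroup (Fin 3)} (h : r ∈ relsN4) :
    PresentedGroup.mk relsN4 r = 1 :=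
  (QuotientGroup.eq_one_iff r).mpr (Subgroup.subset_normalClosure h)

variable {G : Type*} [Group G]

lemma phi_rel2 (φ : PresentedGroup relsN4 →* G) :
    φ (.of 1) * φ (.of 2) * (φ (.of 1))⁻¹ * φ (.of 2) = 1 := by
  have h := congrArg φ (mk_rel_eq_one (show _ ∈ relsN4 from Or.inr (Or.inl rfl)))
  simp [map_mul, map_inv] at h; exact h

lemma phi_rel3 (φ : PresentedGroup relsN4 →* G) :
    φ (.of 0) ^ 2 * φ (.of 1) ^ 2 * (φ (.of 2))⁻¹ = 1 := by
  have h := congrArg φ (mk_rel_eq_one (show _ ∈ relsN4 from Or.inr (Or.inr rfl)))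
  simp [map_mul, map_inv, map_pow] at h; exact h

lemma phi_h (φ : PresentedGroup relsN4 →* Multiplicative (ZMod 2)) :
    φ (.of 2) = Multiplicative.ofAdd (0 : ZMod 2) := by
  have h := phi_rel3 φ
  have sq : ∀ x : Multiplicative (ZMod 2), x ^ 2 = 1 := by decide
  rw [sq, sq, one_mul, one_mul, inv_eq_one] at h
  simpa using h

lemma sq_mod2 : ∀ x : Multiplicative (ZMod 2), x ^ 2 = 1 := by decide

/-- hom from a pair of values for v₁, v₂ (h ↦ 1). -/
def homOf (p : ZMod 2 × ZMod 2) : PresentedGroup relsN4 →* Multiplicative (ZMod 2) :=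
  PresentedGroup.toGroup (f := ![Multiplicative.ofAdd p.1, Multiplicative.ofAdd p.2, 1])
    (by
      intro r hr
      rcases hr with rfl | rfl | rfl <;>
        simp [sq_mod2])

lemma homOf_of (p : ZMod 2 × ZMod 2) (i : Fin 3) :
    homOf p (.of i) = ![Multiplicative.ofAdd p.1, Multiplicative.ofAdd p.2, 1] i :=
  PresentedGroup.toGroup.of _

lemma surj_iff (φ : PresentedGroup relsN4 →* Multiplicative (ZMod 2)) :
    Function.Surjective φ ↔ (φ (.of 0) ≠ 1 ∨ φ (.of 1) ≠ 1) := by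
  constructor
  · intro hs
    by_contra hc
    push_neg at hc
    have hφ : φ = 1 := by
      ext i
      fin_cases i
      · simpa using hc.1
      · simpa using hc.2
      · simpa using phi_h φ
    obtain ⟨g, hg⟩ := hs (Multiplicative.ofAdd 1)
    rw [hφ] at hg
    simp at hg
    exact absurd hg (by decide)
  · intro h y
    have key : ∀ x y : Multiplicative (ZMod 2), x ≠ 1 → (y = 1 ∨ y = x) := by decide
    rcases h with h | h
    · rcases key _ y h with rfl | rfl
      · exact ⟨1, map_one φ⟩
      · exact ⟨.of 0, rfl⟩
    · rcases key _ y h with rfl | rfl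
      · exact ⟨1, map_one φ⟩
      · exact ⟨.of 1, rfl⟩

def epiEquiv : {φ : PresentedGroup relsN4 →* Multiplicative (ZMod 2) //
    Function.Surjective φ} ≃ {p : ZMod 2 × ZMod 2 // p ≠ 0} where
  toFun φ := ⟨((φ.1 (.of 0)).toAdd, (φ.1 (.of 1)).toAdd), by
    intro h
    rw [Prod.ext_iff] at h
    obtain ⟨h0, h1⟩ := h
    rcases (surj_iff φ.1).mp φ.2 with hn | hn
    · exact hn (by simpa using h0)
    · exact hn (by simpa using h1)⟩
  invFun p := ⟨homOf p.1, by
    rw [surj_iff]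
    have hp : p.1.1 ≠ 0 ∨ p.1.2 ≠ 0 := by
      by_contra hc
      push_neg at hc
      exact p.2 (Prod.ext hc.1 hc.2)
    rcases hp with h | h
    · left; simpa [homOf_of] using h
    · right; simpa [homOf_of] using h⟩
  left_inv φ := by
    apply Subtype.ext
    apply PresentedGroup.ext
    intro i
    fin_cases i
    · simp [homOf_of]
    · simp [homOf_of]
    · simpa [homOf_of] using (phi_h φ.1).symm
  right_inv p := by
    apply Subtype.ext
    apply Prod.ext <;> simp [homOf_of]

lemma mod2_apply (n : ℤ) : mod2 (Multiplicative.ofAdd n) = Multiplicative.ofAdd (n : ZMod 2) := rfl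

def psi0 : PresentedGroup relsN4 →* Multiplicative ℤ :=
  PresentedGroup.toGroup
    (f := ![Multiplicative.ofAdd (1 : ℤ), Multiplicative.ofAdd (-1 : ℤ), 1])
    (by
      intro r hr
      rcases hr with rfl | rfl | rfl <;> simp [ofAdd_neg])

lemma psi0_of (i : Fin 3) :
    psi0 (.of i) = ![Multiplicative.ofAdd (1 : ℤ), Multiplicative.ofAdd (-1 : ℤ), 1] i :=
  PresentedGroup.toGroup.of _


/-- There are exactly 3 epimorphisms π₁(N₄) → ℤ/2, each sending h to 0; the one
with φ(v₁)=φ(v₂)=1 factors through ℤ via ψ(v₁)=1, ψ(v₂)=-1, ψ(h)=0, while the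
two with {φ(v₁),φ(v₂)}={0,1} admit no factorization through ℤ. -/
theorem stmt19 :
    Nat.card {φ : PresentedGroup relsN4 →* Multiplicative (ZMod 2) //
        Function.Surjective φ} = 3 ∧
    (∀ φ : PresentedGroup relsN4 →* Multiplicative (ZMod 2), Function.Surjective φ →
      φ (PresentedGroup.of 2) = Multiplicative.ofAdd (0 : ZMod 2)) ∧
    (∀ φ : PresentedGroup relsN4 →* Multiplicative (ZMod 2),
      φ (PresentedGroup.of 0) = Multiplicative.ofAdd (1 : ZMod 2) →
      φ (PresentedGroup.of 1) = Multiplicative.ofAdd (1 : ZMod 2) →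
      φ (PresentedGroup.of 2) = Multiplicative.ofAdd (0 : ZMod 2) →
      ∃ ψ : PresentedGroup relsN4 →* Multiplicative ℤ,
        ψ (PresentedGroup.of 0) = Multiplicative.ofAdd (1 : ℤ) ∧
        ψ (PresentedGroup.of 1) = Multiplicative.ofAdd (-1 : ℤ) ∧
        ψ (PresentedGroup.of 2) = Multiplicative.ofAdd (0 : ℤ) ∧
        φ = mod2.comp ψ) ∧
    (∀ φ : PresentedGroup relsN4 →* Multiplicative (ZMod 2),
      ((φ (PresentedGroup.of 0) = Multiplicative.ofAdd (1 : ZMod 2) ∧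
          φ (PresentedGroup.of 1) = Multiplicative.ofAdd (0 : ZMod 2)) ∨
        (φ (PresentedGroup.of 0) = Multiplicative.ofAdd (0 : ZMod 2) ∧
          φ (PresentedGroup.of 1) = Multiplicative.ofAdd (1 : ZMod 2))) →
      φ (PresentedGroup.of 2) = Multiplicative.ofAdd (0 : ZMod 2) →
      ¬ ∃ ψ : PresentedGroup relsN4 →* Multiplicative ℤ, φ = mod2.comp ψ) := by
  refine ⟨?_, fun φ _ => phi_h φ, ?_, ?_⟩
  · rw [Nat.card_congr epiEquiv, Nat.card_eq_fintype_card]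
    decide
  · intro φ h0 h1 h2
    refine ⟨psi0, psi0_of 0, psi0_of 1, by simpa using psi0_of 2, ?_⟩
    apply PresentedGroup.ext
    intro i
    fin_cases i
    · show φ (.of 0) = mod2 (psi0 (.of 0))
      rw [h0, psi0_of 0]
      decide
    · show φ (.of 1) = mod2 (psi0 (.of 1))
      rw [h1, psi0_of 1]
      decide
    · show φ (.of 2) = mod2 (psi0 (.of 2))
      rw [h2, psi0_of 2]
      rfl
  · rintro φ hc h2 ⟨ψ, rfl⟩
    have hrel2 := congrArg Multiplicative.toAdd (phi_rel2 ψ)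
    have hrel3 := congrArg Multiplicative.toAdd (phi_rel3 ψ)
    simp only [toAdd_mul, toAdd_inv, toAdd_pow, toAdd_one, smul_eq_mul, nsmul_eq_mul] at hrel2 hrel3
    set a := (ψ (.of 0)).toAdd with ha
    set b := (ψ (.of 1)).toAdd with hb
    set c := (ψ (.of 2)).toAdd with hcc
    have hc0 : c = 0 := by push_cast at hrel2 hrel3; omega
    have hab : a = -b := by push_cast at hrel2 hrel3; omega
    have e0 : (mod2.comp ψ) (.of 0) = Multiplicative.ofAdd ((a : ZMod 2)) := by
      show mod2 (ψ (.of 0)) = _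
      rw [show ψ (.of 0) = Multiplicative.ofAdd a from rfl, mod2_apply]
    have e1 : (mod2.comp ψ) (.of 1) = Multiplicative.ofAdd ((b : ZMod 2)) := by
      show mod2 (ψ (.of 1)) = _
      rw [show ψ (.of 1) = Multiplicative.ofAdd b from rfl, mod2_apply]
    have hne : (a : ZMod 2) = (b : ZMod 2) := by
      rw [hab]; push_cast; ring_nf; exact (CharTwo.neg_eq _)
    rcases hc with ⟨hx, hy⟩ | ⟨hx, hy⟩ <;>
      · rw [e0] at hx; rw [e1] at hy
        have hx' := Multiplicative.ofAdd.injective hx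
        have hy' := Multiplicative.ofAdd.injective hy
        rw [hx', hy'] at hne
        exact absurd hne (by decide)
end
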